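/- Let K be a number field with ring of integers O_K and different ideal D_{K/ℚ}, and let k be the positive integer such that tr_{K/ℚ}(O_K) = kℤ. Then for every rational prime p, the p-adic valuation of k equals the minimum over all primes 𝔭 of O_K above p of the floor of v_𝔭(D_{K/ℚ})/e(𝔭|p), where e(𝔭|p) is the ramification index. -/

import Mathlib

open NumberField
open scoped Classical

open scoped nonZeroDivisors

section Aux

variable (K : Type*) [Field K] [NumberField K]

lemma aux_differentIdeal_ne_bot : differentIdeal ℤ (𝓞 K) ≠ ⊥ := by
  intro h
  have h2 := coeIdeal_differentIdeal ℤ ℚ K (𝓞 K)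
  rw [h] at h2
  simp only [FractionalIdeal.coeIdeal_bot] at h2
  have h3 := mul_inv_cancel₀
    (a := FractionalIdeal.dual ℤ ℚ (1 : FractionalIdeal (𝓞 K)⁰ K))
    (FractionalIdeal.dual_ne_zero ℤ ℚ one_ne_zero)
  rw [← h2, mul_zero] at h3
  exact zero_ne_one h3

variable {K}

lemma aux_trace_coe (b : 𝓞 K) :
    Algebra.trace ℚ K (algebraMap (𝓞 K) K b) = algebraMap ℤ ℚ (Algebra.trace ℤ (𝓞 K) b) := by
  rw [← Algebra.algebraMap_intTrace (A := ℤ), Algebra.intTrace_eq_trace]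

lemma aux_le_iff (p : ℕ) (hp : p.Prime) (n : ℕ) :
    differentIdeal ℤ (𝓞 K) ≤ Ideal.span {(p : 𝓞 K) ^ n} ↔
      ∀ b : 𝓞 K, (p : ℤ) ^ n ∣ Algebra.trace ℤ (𝓞 K) b := by
  have hp0 : ((p : 𝓞 K) : 𝓞 K) ≠ 0 := Nat.cast_ne_zero.mpr hp.ne_zero
  have hpK : ((p : K) ^ n) ≠ 0 := pow_ne_zero _ (Nat.cast_ne_zero.mpr hp.ne_zero)
  have hpQ : ((p : ℚ) ^ n) ≠ 0 := pow_ne_zero _ (Nat.cast_ne_zero.mpr hp.ne_zero)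
  have hI : (Ideal.span {(p : 𝓞 K) ^ n} : Ideal (𝓞 K)) ≠ ⊥ :=
    mt Ideal.span_singleton_eq_bot.mp (pow_ne_zero _ hp0)
  rw [differentialIdeal_le_iff (A := ℤ) (K := ℚ) (L := K) hI]
  have h1 : ((Ideal.span {(p : 𝓞 K) ^ n} : Ideal (𝓞 K)) : FractionalIdeal (𝓞 K)⁰ K)⁻¹ =
      FractionalIdeal.spanSingleton (𝓞 K)⁰ (((p : K) ^ n)⁻¹) := by
    rw [FractionalIdeal.coeIdeal_span_singleton, FractionalIdeal.spanSingleton_inv]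
    congr 1
  rw [h1, FractionalIdeal.coe_spanSingleton, Submodule.map_le_iff_le_comap]
  have htrace : ∀ b : 𝓞 K, (Algebra.trace ℚ K) (b • ((p : K) ^ n)⁻¹) =
      ((p : ℚ) ^ n)⁻¹ * algebraMap ℤ ℚ (Algebra.trace ℤ (𝓞 K) b) := by
    intro b
    have : b • ((p : K) ^ n)⁻¹ = ((p : ℚ) ^ n)⁻¹ • (algebraMap (𝓞 K) K b) := by
      rw [Algebra.smul_def, Algebra.smul_def, map_inv₀, map_pow, map_natCast, mul_comm]
    rw [this, map_smul, smul_eq_mul, aux_trace_coe]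
  constructor
  · intro h b
    have hb : (b • (((p : K) ^ n)⁻¹) : K) ∈
        Submodule.restrictScalars ℤ (Submodule.span (𝓞 K) {((p : K) ^ n)⁻¹}) :=
      Submodule.mem_span_singleton.mpr ⟨b, rfl⟩
    have := h hb
    rw [Submodule.mem_comap] at this
    have h2 : ((Algebra.trace ℚ K).restrictScalars ℤ) (b • ((p : K) ^ n)⁻¹) ∈
        (1 : Submodule ℤ ℚ) := this
    rw [LinearMap.coe_restrictScalars, htrace b, Submodule.mem_one] at h2
    obtain ⟨m, hm⟩ := h2
    refine ⟨m, ?_⟩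
    rw [eq_comm, inv_mul_eq_iff_eq_mul₀ hpQ] at hm
    simp only [algebraMap_int_eq, eq_intCast] at hm
    exact_mod_cast hm
  · intro h x hx
    rw [Submodule.restrictScalars_mem, Submodule.mem_span_singleton] at hx
    obtain ⟨b, rfl⟩ := hx
    rw [Submodule.mem_comap]
    have h2 : ((Algebra.trace ℚ K).restrictScalars ℤ) (b • ((p : K) ^ n)⁻¹) =
        ((p : ℚ) ^ n)⁻¹ * algebraMap ℤ ℚ (Algebra.trace ℤ (𝓞 K) b) := htrace b
    rw [h2]
    obtain ⟨c, hc⟩ := h b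
    rw [Submodule.mem_one]
    refine ⟨c, ?_⟩
    rw [hc]
    push_cast
    field_simp

end Aux

/-- The `p`-adic valuation of the generator `k` of `tr_{K/ℚ}(O_K)` equals the minimum,
over the primes `𝔭` of `O_K` above `p`, of `⌊v_𝔭(𝒟_{K/ℚ}) / e(𝔭|p)⌋`. -/
theorem stmt_3 (K : Type*) [Field K] [NumberField K]
    (k : ℕ) (hk : 0 < k)
    (htr : LinearMap.range (Algebra.trace ℤ (𝓞 K)) = Ideal.span {(k : ℤ)})
    (p : ℕ) (hp : p.Prime) :
    padicValNat p k =
      sInf { m : ℕ | ∃ P : Ideal (𝓞 K), P.IsPrime ∧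
        Ideal.comap (algebraMap ℤ (𝓞 K)) P = Ideal.span {(p : ℤ)} ∧
        m = (UniqueFactorizationMonoid.normalizedFactors
              (differentIdeal ℤ (𝓞 K))).count P /
            Ideal.ramificationIdx' (Ideal.span {(p : ℤ)}) P } := by
  classical
  haveI : Fact p.Prime := ⟨hp⟩
  set f := algebraMap ℤ (𝓞 K) with hf
  set pZ : Ideal ℤ := Ideal.span {(p : ℤ)} with hpZ
  set D := differentIdeal ℤ (𝓞 K) with hD
  set S := { m : ℕ | ∃ P : Ideal (𝓞 K), P.IsPrime ∧
        Ideal.comap f P = pZ ∧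
        m = (UniqueFactorizationMonoid.normalizedFactors D).count P /
            Ideal.ramificationIdx' pZ P } with hS
  have hfinj : Function.Injective f := fun a b hab => by
    have : ((a : ℤ) : 𝓞 K) = (b : 𝓞 K) := hab
    exact_mod_cast this
  have hpOK : (p : 𝓞 K) ≠ 0 := Nat.cast_ne_zero.mpr hp.ne_zero
  have hmap : Ideal.map f pZ = Ideal.span {(p : 𝓞 K)} := by
    rw [hpZ, Ideal.map_span, Set.image_singleton, map_natCast]
  have hJbot : Ideal.map f pZ ≠ ⊥ := by
    rw [hmap]
    exact mt Ideal.span_singleton_eq_bot.mp hpOK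
  have hDbot : D ≠ ⊥ := aux_differentIdeal_ne_bot K
  -- primes above p have nonzero ramification index and are nonbot
  have hPne : ∀ P : Ideal (𝓞 K), P.IsPrime → Ideal.comap f P = pZ → P ≠ ⊥ := by
    intro P hPp hPc hPb
    apply hpOK
    have : (p : ℤ) ∈ Ideal.comap f P := by
      rw [hPc]; exact Ideal.mem_span_singleton_self _
    rw [hPb] at this
    simpa using this
  have hle : ∀ P : Ideal (𝓞 K), P.IsPrime → Ideal.comap f P = pZ → Ideal.map f pZ ≤ P := by
    intro P hPp hPc
    rw [Ideal.map_le_iff_le_comap, hPc]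
  have hepos : ∀ P : Ideal (𝓞 K), P.IsPrime → Ideal.comap f P = pZ →
      0 < Ideal.ramificationIdx' pZ P := by
    intro P hPp hPc
    exact Nat.pos_of_ne_zero
      (Ideal.IsDedekindDomain.ramificationIdx'_ne_zero hJbot hPp (hle P hPp hPc))
  have hcount : ∀ P : Ideal (𝓞 K), P.IsPrime → Ideal.comap f P = pZ →
      Ideal.ramificationIdx' pZ P =
        (UniqueFactorizationMonoid.normalizedFactors (Ideal.map f pZ)).count P := by
    intro P hPp hPc
    exact Ideal.IsDedekindDomain.ramificationIdx'_eq_normalizedFactors_count hJbot hPp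
      (hPne P hPp hPc)
  -- key equivalence between divisibility and the valuation conditions
  have key : ∀ n : ℕ, ((p : ℤ) ^ n ∣ (k : ℤ)) ↔
      ∀ P : Ideal (𝓞 K), P.IsPrime → Ideal.comap f P = pZ →
        n * Ideal.ramificationIdx' pZ P ≤
          (UniqueFactorizationMonoid.normalizedFactors D).count P := by
    intro n
    have step1 : ((p : ℤ) ^ n ∣ (k : ℤ)) ↔ ∀ b : 𝓞 K, (p : ℤ) ^ n ∣ Algebra.trace ℤ (𝓞 K) b := by
      constructor
      · intro h b
        have hb : Algebra.trace ℤ (𝓞 K) b ∈ LinearMap.range (Algebra.trace ℤ (𝓞 K)) :=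
          ⟨b, rfl⟩
        rw [htr, Ideal.mem_span_singleton] at hb
        exact dvd_trans h hb
      · intro h
        have hb : (k : ℤ) ∈ LinearMap.range (Algebra.trace ℤ (𝓞 K)) := by
          rw [htr]; exact Ideal.mem_span_singleton_self _
        obtain ⟨b, hb⟩ := hb
        rw [← hb]
        exact h b
    have step2 : (∀ b : 𝓞 K, (p : ℤ) ^ n ∣ Algebra.trace ℤ (𝓞 K) b) ↔
        D ≤ Ideal.span {(p : 𝓞 K)} ^ n := by
      rw [Ideal.span_singleton_pow]
      exact (aux_le_iff p hp n).symm
    have step3 : (D ≤ Ideal.span {(p : 𝓞 K)} ^ n) ↔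
        ∀ P : Ideal (𝓞 K),
          n * (UniqueFactorizationMonoid.normalizedFactors (Ideal.map f pZ)).count P ≤
            (UniqueFactorizationMonoid.normalizedFactors D).count P := by
      rw [← hmap, ← Ideal.dvd_iff_le,
        UniqueFactorizationMonoid.dvd_iff_normalizedFactors_le_normalizedFactors
          (pow_ne_zero _ hJbot) hDbot,
        UniqueFactorizationMonoid.normalizedFactors_pow, Multiset.le_iff_count]
      constructor
      · intro h P
        have := h P
        rwa [Multiset.count_nsmul] at this
      · intro h P
        rw [Multiset.count_nsmul]
        exact h P
    rw [step1, step2, step3]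
    constructor
    · intro h P hPp hPc
      rw [hcount P hPp hPc]
      exact h P
    · intro h P
      by_cases hc : (UniqueFactorizationMonoid.normalizedFactors (Ideal.map f pZ)).count P = 0
      · rw [hc, mul_zero]; exact Nat.zero_le _
      · have hPmem : P ∈ UniqueFactorizationMonoid.normalizedFactors (Ideal.map f pZ) :=
          Multiset.count_pos.mp (Nat.pos_of_ne_zero hc)
        have hPprime : Prime P := UniqueFactorizationMonoid.prime_of_normalized_factor P hPmem
        have hPp : P.IsPrime := Ideal.isPrime_of_prime hPprime
        have hPdvd : P ∣ Ideal.map f pZ :=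
          UniqueFactorizationMonoid.dvd_of_mem_normalizedFactors hPmem
        have hlePP : Ideal.map f pZ ≤ P := Ideal.le_of_dvd hPdvd
        have hPc : Ideal.comap f P = pZ := by
          have h1 : pZ ≤ Ideal.comap f P := by
            rw [← Ideal.map_le_iff_le_comap]
            exact hlePP
          have h2 : pZ.IsMaximal := by
            rw [hpZ]
            exact PrincipalIdealRing.isMaximal_of_irreducible
              (Int.prime_iff_natAbs_prime.mpr (by simpa using hp)).irreducible
          have h3 : Ideal.comap f P ≠ ⊤ := by
            intro htop
            have : (1 : ℤ) ∈ Ideal.comap f P := htop ▸ Submodule.mem_top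
            simp only [Ideal.mem_comap, map_one] at this
            exact hPp.ne_top (Ideal.eq_top_of_isUnit_mem P this isUnit_one)
          exact (h2.eq_of_le h3 h1).symm
        have := h P hPp hPc
        rwa [hcount P hPp hPc] at this
  -- nonemptiness of S
  haveI : pZ.IsPrime := by
    rw [hpZ, Ideal.span_singleton_prime (by exact_mod_cast hp.ne_zero)]
    exact Int.prime_iff_natAbs_prime.mpr (by simpa using hp)
  obtain ⟨Q, hQp, hQc⟩ :=
    Ideal.exists_ideal_over_prime_of_isIntegral_of_isDomain pZ
      (by rw [(RingHom.injective_iff_ker_eq_bot f).mp hfinj]; exact bot_le)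
  have hSne : S.Nonempty :=
    ⟨(UniqueFactorizationMonoid.normalizedFactors D).count Q / Ideal.ramificationIdx' pZ Q,
      Q, hQp, hQc, rfl⟩
  -- main bidirectional bound
  have main : ∀ n : ℕ, n ≤ padicValNat p k ↔ n ≤ sInf S := by
    intro n
    rw [← padicValNat_dvd_iff_le hk.ne']
    have cast_iff : p ^ n ∣ k ↔ (p : ℤ) ^ n ∣ (k : ℤ) := by
      rw [← Nat.cast_pow]
      exact Int.natCast_dvd_natCast.symm
    rw [cast_iff, key n]
    constructor
    · intro h
      apply le_csInf hSne
      rintro m ⟨P, hPp, hPc, rfl⟩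
      rw [Nat.le_div_iff_mul_le (hepos P hPp hPc)]
      exact h P hPp hPc
    · intro h P hPp hPc
      have hm : (UniqueFactorizationMonoid.normalizedFactors D).count P /
          Ideal.ramificationIdx' pZ P ∈ S := ⟨P, hPp, hPc, rfl⟩
      have := h.trans (Nat.sInf_le hm)
      rwa [Nat.le_div_iff_mul_le (hepos P hPp hPc)] at this
  exact le_antisymm ((main _).mp le_rfl) ((main _).mpr le_rfl)
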